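/- Let u : ℝⁿ → ℝ be measurable with ∫ |u| dx = 1 and ∫ ‖x‖^α |u(x)| dx < ∞ for some α > 0. Set A = A_{n,α} where A^{n/α} = |S^{n-1}| Γ(n/α)/α. Then ∫ |u(x)| log(1/|u(x)|) dx ≤ A ∫ ‖x‖^α |u(x)| dx, with the convention that the integrand is 0 where u = 0. -/

import Mathlib

open MeasureTheory Real

lemma aux_integrable_exp_rpow (n : ℕ) {α : ℝ} (hα : 0 < α) :
    Integrable (fun x : EuclideanSpace ℝ (Fin n) => Real.exp (-‖x‖ ^ α)) := by
  by_contra h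
  have h0 : ∫ x : EuclideanSpace ℝ (Fin n), Real.exp (-‖x‖ ^ α) = 0 := integral_undef h
  have hball := MeasureTheory.measure_unitBall_eq_integral_div_gamma
    (volume : Measure (EuclideanSpace ℝ (Fin n))) hα
  rw [h0] at hball
  simp only [zero_div, ENNReal.ofReal_zero] at hball
  exact (Metric.measure_ball_pos volume (0 : EuclideanSpace ℝ (Fin n)) one_pos).ne' hball

lemma aux_pointwise (t c : ℝ) (ht : 0 ≤ t) :
    t * Real.log t⁻¹ ≤ c * t + (Real.exp (-c) - t) := by
  rcases eq_or_lt_of_le ht with h | h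
  · rw [← h]
    simp only [zero_mul, mul_zero, sub_zero, zero_add]
    positivity
  · have hlog : Real.log (Real.exp (-c) / t) ≤ Real.exp (-c) / t - 1 :=
      Real.log_le_sub_one_of_pos (by positivity)
    have hlogeq : Real.log (Real.exp (-c) / t) = -c + Real.log t⁻¹ := by
      rw [Real.log_div (Real.exp_ne_zero _) h.ne', Real.log_exp, Real.log_inv]
      ring
    have h2 : t * Real.log (Real.exp (-c) / t) ≤ Real.exp (-c) - t := by
      have := mul_le_mul_of_nonneg_left hlog h.le
      rwa [mul_sub, mul_one, mul_div_cancel₀ _ h.ne'] at this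
    rw [hlogeq, mul_add] at h2
    linarith

theorem entropy_le_weighted_moment (n : ℕ) (α A : ℝ) (hn : 1 ≤ n) (hα : 0 < α)
    (hApos : 0 < A)
    (hA : A ^ ((n : ℝ) / α) =
      (2 * Real.pi ^ ((n : ℝ) / 2) / Real.Gamma ((n : ℝ) / 2)) * Real.Gamma ((n : ℝ) / α) / α)
    (u : EuclideanSpace ℝ (Fin n) → ℝ) (hu : Measurable u)
    (hnorm : ∫ x, |u x| = 1)
    (hmom : Integrable (fun x : EuclideanSpace ℝ (Fin n) => ‖x‖ ^ α * |u x|)) :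
    ∫ x, |u x| * Real.log (|u x|)⁻¹ ≤ A * ∫ x, ‖x‖ ^ α * |u x| := by
  have hmompos : 0 ≤ ∫ x : EuclideanSpace ℝ (Fin n), ‖x‖ ^ α * |u x| :=
    integral_nonneg fun x => by positivity
  by_cases hg : Integrable
      (fun x : EuclideanSpace ℝ (Fin n) => |u x| * Real.log (|u x|)⁻¹)
  swap
  · rw [integral_undef hg]
    exact mul_nonneg hApos.le hmompos
  -- |u| is integrable
  have hfint : Integrable (fun x : EuclideanSpace ℝ (Fin n) => |u x|) := by
    by_contra h
    rw [integral_undef h] at hnorm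
    norm_num at hnorm
  -- exp(-(A‖x‖^α)) is integrable
  have hc : (A ^ (α⁻¹) : ℝ) ≠ 0 := (Real.rpow_pos_of_pos hApos _).ne'
  have hkey : ∀ x : EuclideanSpace ℝ (Fin n),
      Real.exp (-‖(A ^ (α⁻¹) : ℝ) • x‖ ^ α) = Real.exp (-(A * ‖x‖ ^ α)) := by
    intro x
    rw [norm_smul, Real.norm_eq_abs, abs_of_pos (Real.rpow_pos_of_pos hApos _),
      Real.mul_rpow (Real.rpow_pos_of_pos hApos _).le (norm_nonneg _),
      ← Real.rpow_mul hApos.le, inv_mul_cancel₀ hα.ne', Real.rpow_one]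
  have hEint : Integrable
      (fun x : EuclideanSpace ℝ (Fin n) => Real.exp (-(A * ‖x‖ ^ α))) := by
    have := (integrable_comp_smul_iff (volume : Measure (EuclideanSpace ℝ (Fin n)))
      (fun x : EuclideanSpace ℝ (Fin n) => Real.exp (-‖x‖ ^ α)) hc).mpr
      (aux_integrable_exp_rpow n hα)
    refine this.congr (Filter.Eventually.of_forall fun x => ?_)
    exact hkey x
  -- value of the Gaussian-type integral
  have hnpos : (0 : ℝ) < (n : ℝ) := by exact_mod_cast hn
  have hΓ2 : 0 < Real.Gamma ((n : ℝ) / 2) := Real.Gamma_pos_of_pos (by positivity)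
  have hΓα : 0 < Real.Gamma ((n : ℝ) / α) := Real.Gamma_pos_of_pos (by positivity)
  have hval : ∫ x : EuclideanSpace ℝ (Fin n), Real.exp (-(A * ‖x‖ ^ α)) = 1 := by
    haveI : Nonempty (Fin n) := ⟨⟨0, hn⟩⟩
    have hdim : Module.finrank ℝ (EuclideanSpace ℝ (Fin n)) = n := by
      simp [finrank_euclideanSpace]
    rw [MeasureTheory.integral_fun_norm_addHaar
      (volume : Measure (EuclideanSpace ℝ (Fin n)))
      (fun y : ℝ => Real.exp (-(A * y ^ α))), hdim]
    have hinner : ∫ y in Set.Ioi (0 : ℝ), y ^ (n - 1) • Real.exp (-(A * y ^ α)) =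
        A ^ (-(n : ℝ) / α) * (1 / α) * Real.Gamma ((n : ℝ) / α) := by
      rw [show (∫ y in Set.Ioi (0 : ℝ), y ^ (n - 1) • Real.exp (-(A * y ^ α))) =
          ∫ y in Set.Ioi (0 : ℝ), y ^ ((n : ℝ) - 1) * Real.exp (-A * y ^ α) from
        setIntegral_congr_fun measurableSet_Ioi (fun y hy => by
          rw [smul_eq_mul, ← Real.rpow_natCast y (n - 1), Nat.cast_sub hn, Nat.cast_one,
            neg_mul])]
      rw [integral_rpow_mul_exp_neg_mul_rpow hα (by linarith) hApos]
      norm_num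
    rw [hinner]
    have hvol : ((volume (Metric.ball (0 : EuclideanSpace ℝ (Fin n)) 1)).toReal : ℝ) =
        Real.pi ^ ((n : ℝ) / 2) / (((n : ℝ) / 2) * Real.Gamma ((n : ℝ) / 2)) := by
      have : Nonempty (Fin n) := ⟨⟨0, hn⟩⟩
      rw [EuclideanSpace.volume_ball (Fin n) (0 : EuclideanSpace ℝ (Fin n)) 1]
      rw [ENNReal.toReal_mul, ENNReal.toReal_pow, ENNReal.toReal_ofReal one_pos.le, one_pow,
        one_mul, ENNReal.toReal_ofReal (by positivity), Fintype.card_fin]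
      congr 1
      · rw [← Real.rpow_natCast (Real.sqrt Real.pi) n, Real.sqrt_eq_rpow,
          ← Real.rpow_mul Real.pi_pos.le]
        ring_nf
      · rw [Real.Gamma_add_one (by positivity : ((n : ℝ) / 2) ≠ 0)]
    rw [measureReal_def, hvol, nsmul_eq_mul, smul_eq_mul]
    have hrw : (n : ℝ) * (Real.pi ^ ((n : ℝ) / 2) / (((n : ℝ) / 2) * Real.Gamma ((n : ℝ) / 2)) *
        (A ^ (-(n : ℝ) / α) * (1 / α) * Real.Gamma ((n : ℝ) / α))) =
        ((2 * Real.pi ^ ((n : ℝ) / 2) / Real.Gamma ((n : ℝ) / 2)) * Real.Gamma ((n : ℝ) / α) / α)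
          * A ^ (-(n : ℝ) / α) := by
      field_simp
    rw [hrw, ← hA, ← Real.rpow_add hApos, neg_div, add_neg_cancel, Real.rpow_zero]
  -- pointwise bound and conclusion
  have hptwise : ∀ x : EuclideanSpace ℝ (Fin n),
      |u x| * Real.log (|u x|)⁻¹ ≤
        A * (‖x‖ ^ α * |u x|) + (Real.exp (-(A * ‖x‖ ^ α)) - |u x|) := by
    intro x
    have := aux_pointwise (|u x|) (A * ‖x‖ ^ α) (abs_nonneg _)
    calc |u x| * Real.log (|u x|)⁻¹
        ≤ A * ‖x‖ ^ α * |u x| + (Real.exp (-(A * ‖x‖ ^ α)) - |u x|) := this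
      _ = A * (‖x‖ ^ α * |u x|) + (Real.exp (-(A * ‖x‖ ^ α)) - |u x|) := by ring
  have hmul : Integrable (fun x : EuclideanSpace ℝ (Fin n) =>
      A * (‖x‖ ^ α * |u x|)) := hmom.const_mul A
  have hsub : Integrable (fun x : EuclideanSpace ℝ (Fin n) =>
      Real.exp (-(A * ‖x‖ ^ α)) - |u x|) := hEint.sub hfint
  have hRint : Integrable (fun x : EuclideanSpace ℝ (Fin n) =>
      A * (‖x‖ ^ α * |u x|) + (Real.exp (-(A * ‖x‖ ^ α)) - |u x|)) := hmul.add hsub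
  have hle := integral_mono hg hRint hptwise
  rw [integral_add hmul hsub, integral_sub hEint hfint,
    integral_const_mul, hval, hnorm, sub_self, add_zero] at hle
  exact hle
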